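/- arXiv:1812.00446 — 2 statements merged into one kernel-verified Lean document; each statement's English description precedes it below -/
import Mathlib

section
/- In a quasitriangular Hopf algebra H with R-matrix R = \sum_i a_i \otimes b_i, the Drinfeld element u = \sum_i S(b_i) a_i satisfies u = \sum_i b_i S^{-1}(a_i), and its inverse is given by u^{-1} = \sum_i S^{-2}(b_i) a_i = \sum_i S^{-1}(b_i) S(a_i) = \sum_i b_i S^2(a_i). -/
open scoped TensorProduct
open TensorProduct

variable {k A : Type} [Field k] [Ring A] [HopfAlgebra k A]

/-- The antipode of the Hopf algebra `A`. -/
noncomputable def ant : A →ₗ[k] A := HopfAlgebra.antipode k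

open Coalgebra LinearMap

noncomputable def conv {C : Type} [AddCommGroup C] [Module k C] [Coalgebra k C]
    (f g : C →ₗ[k] A) : C →ₗ[k] A :=
  LinearMap.mul' k A ∘ₗ TensorProduct.map f g ∘ₗ Coalgebra.comul

lemma conv_repr {C : Type} [AddCommGroup C] [Module k C] [Coalgebra k C]
    (f g : C →ₗ[k] A) (x : C) {κ : Type} (r : Coalgebra.Repr k x κ) :
    conv f g x = ∑ i ∈ r.index, f (r.left i) * g (r.right i) := by
  simp only [conv, LinearMap.comp_apply, ← r.eq, map_sum, TensorProduct.map_tmul,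
    LinearMap.mul'_apply]

/-- the convolution unit -/
noncomputable def cunit {C : Type} [AddCommGroup C] [Module k C] [Coalgebra k C] :
    C →ₗ[k] A :=
  (Algebra.linearMap k A) ∘ₗ Coalgebra.counit

lemma conv_cunit_left {C : Type} [AddCommGroup C] [Module k C] [Coalgebra k C]
    (f : C →ₗ[k] A) : conv (cunit (k := k) (A := A)) f = f := by
  ext x
  let r := Coalgebra.Repr.arbitrary k x
  rw [conv_repr _ _ x r]
  have h := Coalgebra.sum_counit_tmul_eq (R := k) r
  apply_fun (TensorProduct.lid k C) at h
  simp only [map_sum, TensorProduct.lid_tmul, one_smul] at h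
  calc ∑ i ∈ r.index, cunit (k := k) (A := A) (r.left i) * f (r.right i)
      = ∑ i ∈ r.index, counit (R := k) (r.left i) • f (r.right i) := by
        simp [cunit, Algebra.smul_def]
    _ = f (∑ i ∈ r.index, counit (R := k) (r.left i) • r.right i) := by
        rw [map_sum]; simp [map_smul]
    _ = f x := by rw [h]

lemma conv_cunit_right {C : Type} [AddCommGroup C] [Module k C] [Coalgebra k C]
    (f : C →ₗ[k] A) : conv f (cunit (k := k) (A := A)) = f := by
  ext x
  let r := Coalgebra.Repr.arbitrary k x
  rw [conv_repr _ _ x r]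
  have h := Coalgebra.sum_tmul_counit_eq (R := k) r
  apply_fun (TensorProduct.rid k C) at h
  simp only [map_sum, TensorProduct.rid_tmul, one_smul] at h
  calc ∑ i ∈ r.index, f (r.left i) * cunit (k := k) (A := A) (r.right i)
      = ∑ i ∈ r.index, counit (R := k) (r.right i) • f (r.left i) := by
        simp [cunit, Algebra.smul_def, Algebra.commutes, mul_comm]
    _ = f (∑ i ∈ r.index, counit (R := k) (r.right i) • r.left i) := by
        rw [map_sum]; simp [map_smul]
    _ = f x := by rw [h]

lemma conv_assoc {C : Type} [AddCommGroup C] [Module k C] [Coalgebra k C]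
    (f g h : C →ₗ[k] A) : conv (conv f g) h = conv f (conv g h) := by
  ext x
  let r := Coalgebra.Repr.arbitrary k x
  let a₁ : (i : r.ι) → Coalgebra.Repr k (r.left i) (C × C) := fun i => Coalgebra.Repr.arbitrary k _
  let a₂ : (i : r.ι) → Coalgebra.Repr k (r.right i) (C × C) := fun i => Coalgebra.Repr.arbitrary k _
  have key := Coalgebra.sum_tmul_tmul_eq (R := k) r a₁ a₂
  apply_fun (LinearMap.mul' k A ∘ₗ TensorProduct.map f (LinearMap.mul' k A ∘ₗ TensorProduct.map g h)) at key
  simp only [map_sum, LinearMap.comp_apply, TensorProduct.map_tmul, LinearMap.mul'_apply] at key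
  rw [conv_repr _ _ x r, conv_repr _ _ x r]
  calc ∑ i ∈ r.index, conv f g (r.left i) * h (r.right i)
      = ∑ i ∈ r.index, ∑ j ∈ (a₁ i).index,
          f ((a₁ i).left j) * (g ((a₁ i).right j) * h (r.right i)) := by
        refine Finset.sum_congr rfl fun i _ => ?_
        rw [conv_repr _ _ _ (a₁ i), Finset.sum_mul]
        simp [mul_assoc]
    _ = ∑ i ∈ r.index, ∑ j ∈ (a₂ i).index,
          f (r.left i) * (g ((a₂ i).left j) * h ((a₂ i).right j)) := key
    _ = ∑ i ∈ r.index, f (r.left i) * conv g h (r.right i) := by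
        refine Finset.sum_congr rfl fun i _ => ?_
        rw [conv_repr _ _ _ (a₂ i), Finset.mul_sum]

lemma ant_one : ant (k := k) (1 : A) = 1 := by
  have h := HopfAlgebra.mul_antipode_rTensor_comul_apply (R := k) (1 : A)
  simp only [Bialgebra.comul_one, Algebra.TensorProduct.one_def, LinearMap.rTensor_tmul,
    LinearMap.mul'_apply, Bialgebra.counit_one, map_one, mul_one] at h
  exact h


lemma conv_tmul (x y : A) {κ₁ κ₂ : Type} (rx : Coalgebra.Repr k x κ₁) (ry : Coalgebra.Repr k y κ₂)
    (f g : A ⊗[k] A →ₗ[k] A) :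
    conv f g (x ⊗ₜ[k] y) = ∑ i ∈ rx.index, ∑ j ∈ ry.index,
      f (rx.left i ⊗ₜ[k] ry.left j) * g (rx.right i ⊗ₜ[k] ry.right j) := by
  simp only [conv, LinearMap.comp_apply]
  rw [TensorProduct.comul_def]
  simp only [LinearMap.comp_apply, TensorProduct.map_tmul, ← rx.eq, ← ry.eq,
    TensorProduct.AlgebraTensorModule.map_tmul]
  rw [TensorProduct.sum_tmul]
  simp only [TensorProduct.tmul_sum, map_sum, LinearEquiv.coe_coe,
    TensorProduct.tensorTensorTensorComm_tmul, TensorProduct.map_tmul, LinearMap.mul'_apply,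
    TensorProduct.AlgebraTensorModule.tensorTensorTensorComm_tmul,
    TensorProduct.AlgebraTensorModule.map_tmul]

noncomputable def mulRepr (x y : A) {κ₁ κ₂ : Type} (rx : Coalgebra.Repr k x κ₁) (ry : Coalgebra.Repr k y κ₂) :
    Coalgebra.Repr k (x * y) (κ₁ × κ₂) where
  index := rx.index ×ˢ ry.index
  left := fun p => rx.left p.1 * ry.left p.2
  right := fun p => rx.right p.1 * ry.right p.2
  eq := by
    rw [Finset.sum_product, Bialgebra.comul_mul, ← rx.eq, ← ry.eq, Finset.sum_mul_sum]
    simp [Algebra.TensorProduct.tmul_mul_tmul]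

lemma sum_ant_mul {x : A} {κ : Type} (r : Coalgebra.Repr k x κ) :
    ∑ i ∈ r.index, ant (k := k) (r.left i) * r.right i
      = algebraMap k A (counit (R := k) x) :=
  HopfAlgebra.sum_antipode_mul_eq_algebraMap_counit r

lemma sum_mul_ant {x : A} {κ : Type} (r : Coalgebra.Repr k x κ) :
    ∑ i ∈ r.index, r.left i * ant (k := k) (r.right i)
      = algebraMap k A (counit (R := k) x) :=
  HopfAlgebra.sum_mul_antipode_eq_algebraMap_counit r

lemma sum_ant_mul_prod (x y : A) {κ₁ κ₂ : Type} (rx : Coalgebra.Repr k x κ₁) (ry : Coalgebra.Repr k y κ₂) :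
    ∑ i ∈ rx.index, ∑ j ∈ ry.index,
        ant (k := k) (rx.left i * ry.left j) * (rx.right i * ry.right j)
      = algebraMap k A (counit (R := k) (x * y)) := by
  have h : ∑ p ∈ rx.index ×ˢ ry.index,
      ant (k := k) (rx.left p.1 * ry.left p.2) * (rx.right p.1 * ry.right p.2)
      = algebraMap k A (counit (R := k) (x * y)) :=
    HopfAlgebra.sum_antipode_mul_eq_algebraMap_counit (R := k) (mulRepr x y rx ry)
  rw [Finset.sum_product] at h
  exact h

/-- `S ∘ μ` convolved with `μ` is the unit. -/
lemma conv_antmul_mul :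
    conv ((ant (k := k) (A := A)) ∘ₗ LinearMap.mul' k A) (LinearMap.mul' k A) = cunit := by
  apply TensorProduct.ext'
  intro x y
  let rx := Coalgebra.Repr.arbitrary k x
  let ry := Coalgebra.Repr.arbitrary k y
  rw [conv_tmul x y rx ry]
  calc ∑ i ∈ rx.index, ∑ j ∈ ry.index,
        (ant (k := k) ∘ₗ LinearMap.mul' k A) (rx.left i ⊗ₜ[k] ry.left j) *
          LinearMap.mul' k A (rx.right i ⊗ₜ[k] ry.right j)
      = ∑ i ∈ rx.index, ∑ j ∈ ry.index,
        ant (k := k) (rx.left i * ry.left j) * (rx.right i * ry.right j) := by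
        simp only [LinearMap.comp_apply, LinearMap.mul'_apply]
    _ = algebraMap k A (counit (R := k) (x * y)) := sum_ant_mul_prod x y rx ry
    _ = cunit (x ⊗ₜ[k] y) := by
        simp [cunit, TensorProduct.counit_def, Bialgebra.counit_mul, mul_comm]

/-- `μ` convolved with `S(y)S(x)` is the unit. -/
lemma conv_mul_antiant :
    conv (LinearMap.mul' k A)
      (LinearMap.mul' k A ∘ₗ TensorProduct.map (ant (k := k)) (ant (k := k))
        ∘ₗ (TensorProduct.comm k A A).toLinearMap) = cunit := by
  apply TensorProduct.ext'
  intro x y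
  let rx := Coalgebra.Repr.arbitrary k x
  let ry := Coalgebra.Repr.arbitrary k y
  rw [conv_tmul x y rx ry]
  calc ∑ i ∈ rx.index, ∑ j ∈ ry.index,
        LinearMap.mul' k A (rx.left i ⊗ₜ[k] ry.left j) *
          ((LinearMap.mul' k A ∘ₗ TensorProduct.map (ant (k := k)) (ant (k := k))
            ∘ₗ (TensorProduct.comm k A A).toLinearMap) (rx.right i ⊗ₜ[k] ry.right j))
      = ∑ i ∈ rx.index, rx.left i *
          (∑ j ∈ ry.index, ry.left j * ant (k := k) (ry.right j)) * ant (k := k) (rx.right i) := by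
        refine Finset.sum_congr rfl fun i _ => ?_
        rw [Finset.mul_sum, Finset.sum_mul]
        refine Finset.sum_congr rfl fun j _ => ?_
        simp only [LinearMap.comp_apply, LinearEquiv.coe_coe, TensorProduct.comm_tmul,
          TensorProduct.map_tmul, LinearMap.mul'_apply]
        rw [mul_assoc, mul_assoc, mul_assoc]
    _ = ∑ i ∈ rx.index, rx.left i * algebraMap k A (counit (R := k) y) * ant (k := k) (rx.right i) := by
        rw [sum_mul_ant ry]
    _ = algebraMap k A (counit (R := k) y) * ∑ i ∈ rx.index, rx.left i * ant (k := k) (rx.right i) := by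
        rw [Finset.mul_sum]
        refine Finset.sum_congr rfl fun i _ => ?_
        rw [← Algebra.commutes (counit (R := k) y) (rx.left i), mul_assoc]
    _ = cunit (x ⊗ₜ[k] y) := by
        rw [sum_mul_ant rx]
        simp [cunit, TensorProduct.counit_def, ← map_mul, mul_comm]

lemma ant_mul (x y : A) :
    ant (k := k) (x * y) = ant (k := k) y * ant (k := k) x := by
  have hFG : (ant (k := k) (A := A)) ∘ₗ LinearMap.mul' k A
      = LinearMap.mul' k A ∘ₗ TensorProduct.map (ant (k := k)) (ant (k := k))
        ∘ₗ (TensorProduct.comm k A A).toLinearMap := by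
    calc (ant (k := k) (A := A)) ∘ₗ LinearMap.mul' k A
        = conv ((ant (k := k) (A := A)) ∘ₗ LinearMap.mul' k A) cunit :=
          (conv_cunit_right _).symm
      _ = conv ((ant (k := k) (A := A)) ∘ₗ LinearMap.mul' k A)
            (conv (LinearMap.mul' k A)
              (LinearMap.mul' k A ∘ₗ TensorProduct.map (ant (k := k)) (ant (k := k))
                ∘ₗ (TensorProduct.comm k A A).toLinearMap)) := by rw [conv_mul_antiant]
      _ = conv (conv ((ant (k := k) (A := A)) ∘ₗ LinearMap.mul' k A) (LinearMap.mul' k A))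
            (LinearMap.mul' k A ∘ₗ TensorProduct.map (ant (k := k)) (ant (k := k))
              ∘ₗ (TensorProduct.comm k A A).toLinearMap) := (conv_assoc _ _ _).symm
      _ = conv cunit
            (LinearMap.mul' k A ∘ₗ TensorProduct.map (ant (k := k)) (ant (k := k))
              ∘ₗ (TensorProduct.comm k A A).toLinearMap) := by rw [conv_antmul_mul]
      _ = _ := conv_cunit_left _
  have h := congrArg (fun f : A ⊗[k] A →ₗ[k] A => f (x ⊗ₜ[k] y)) hFG
  simpa using h

/-- `ε ⊗ id` followed by `lid`. -/
noncomputable def epsl : A ⊗[k] A →ₗ[k] A :=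
  (TensorProduct.lid k A).toLinearMap ∘ₗ LinearMap.rTensor A (Coalgebra.counit (R := k))

@[simp] lemma epsl_tmul (p q : A) :
    epsl (k := k) (p ⊗ₜ[k] q) = Coalgebra.counit (R := k) p • q := by
  simp [epsl]

@[simp] lemma epsl_comul (x : A) : epsl (k := k) (Coalgebra.comul (R := k) x) = x := by
  simp [epsl]

/-- `id ⊗ ε` followed by `rid`. -/
noncomputable def epsr : A ⊗[k] A →ₗ[k] A :=
  (TensorProduct.rid k A).toLinearMap ∘ₗ LinearMap.lTensor A (Coalgebra.counit (R := k))

@[simp] lemma epsr_tmul (p q : A) :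
    epsr (k := k) (p ⊗ₜ[k] q) = Coalgebra.counit (R := k) q • p := by
  simp [epsr]

@[simp] lemma epsr_comul (x : A) : epsr (k := k) (Coalgebra.comul (R := k) x) = x := by
  simp [epsr]

lemma eps_left (x : A) {κ : Type} (r : Coalgebra.Repr k x κ) :
    ∑ i ∈ r.index, Coalgebra.counit (R := k) (r.left i) • r.right i = x := by
  have h := congrArg (epsl (k := k)) r.eq
  simpa [map_sum] using h

lemma eps_right (x : A) {κ : Type} (r : Coalgebra.Repr k x κ) :
    ∑ i ∈ r.index, Coalgebra.counit (R := k) (r.right i) • r.left i = x := by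
  have h := congrArg (epsr (k := k)) r.eq
  simpa [map_sum] using h

lemma ant_algebraMap (c : k) :
    ant (k := k) (algebraMap k A c) = algebraMap k A c := by
  rw [Algebra.algebraMap_eq_smul_one, map_smul, ant_one]

lemma mul_map_ant_id_comul (x : A) :
    LinearMap.mul' k A
      (TensorProduct.map (ant (k := k)) LinearMap.id (Coalgebra.comul (R := k) x))
      = algebraMap k A (Coalgebra.counit (R := k) x) :=
  HopfAlgebra.mul_antipode_rTensor_comul_apply (R := k) x

lemma mul_map_id_ant_comul (x : A) :
    LinearMap.mul' k A
      (TensorProduct.map LinearMap.id (ant (k := k)) (Coalgebra.comul (R := k) x))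
      = algebraMap k A (Coalgebra.counit (R := k) x) :=
  HopfAlgebra.mul_antipode_lTensor_comul_apply (R := k) x

/-- In a quasitriangular Hopf algebra `H` with `R = ∑ i, a i ⊗ b i`,
the Drinfeld element `u = ∑ S(b i) * a i` equals `∑ b i * S⁻¹(a i)`, and its inverse is
`∑ S⁻²(b i) * a i = ∑ S⁻¹(b i) * S(a i) = ∑ b i * S²(a i)`. -/
theorem drinfeld_element
    (Sinv : A →ₗ[k] A)
    (hS1 : ∀ x : A, Sinv (ant (k := k) x) = x)
    (hS2 : ∀ x : A, ant (k := k) (Sinv x) = x)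
    (ι : Type) [Fintype ι] (a b : ι → A)
    (hRunit : IsUnit (∑ i, a i ⊗ₜ[k] b i))
    (hIntertwine : ∀ x : A, (∑ i, a i ⊗ₜ[k] b i) * Coalgebra.comul x
        = (TensorProduct.comm k A A) (Coalgebra.comul x) * (∑ i, a i ⊗ₜ[k] b i))
    (hex1 : (∑ i, (Coalgebra.comul (R := k) (a i)) ⊗ₜ[k] b i : (A ⊗[k] A) ⊗[k] A)
        = (∑ i, (a i ⊗ₜ[k] (1:A)) ⊗ₜ[k] b i) * (∑ i, ((1:A) ⊗ₜ[k] a i) ⊗ₜ[k] b i))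
    (hex2 : (∑ i, a i ⊗ₜ[k] (Coalgebra.comul (R := k) (b i)) : A ⊗[k] (A ⊗[k] A))
        = (∑ i, a i ⊗ₜ[k] ((1:A) ⊗ₜ[k] b i)) * (∑ i, a i ⊗ₜ[k] (b i ⊗ₜ[k] (1:A)))) :
    (∑ i, ant (k := k) (b i) * a i) = (∑ i, b i * Sinv (a i))
    ∧ (∑ i, ant (k := k) (b i) * a i) * (∑ i, Sinv (Sinv (b i)) * a i) = 1
    ∧ (∑ i, Sinv (Sinv (b i)) * a i) * (∑ i, ant (k := k) (b i) * a i) = 1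
    ∧ (∑ i, Sinv (Sinv (b i)) * a i) = (∑ i, Sinv (b i) * ant (k := k) (a i))
    ∧ (∑ i, Sinv (Sinv (b i)) * a i) = (∑ i, b i * ant (k := k) (ant (k := k) (a i))) := by
  -- normalized hexagon identities
  have hhex1 : (∑ i, (Coalgebra.comul (R := k) (a i)) ⊗ₜ[k] b i : (A ⊗[k] A) ⊗[k] A)
      = ∑ i, ∑ j, (a i ⊗ₜ[k] a j) ⊗ₜ[k] (b i * b j) := by
    rw [hex1, Finset.sum_mul_sum]
    simp [Algebra.TensorProduct.tmul_mul_tmul]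
  have hhex2 : (∑ i, a i ⊗ₜ[k] (Coalgebra.comul (R := k) (b i)) : A ⊗[k] (A ⊗[k] A))
      = ∑ i, ∑ j, (a i * a j) ⊗ₜ[k] (b j ⊗ₜ[k] b i) := by
    rw [hex2, Finset.sum_mul_sum]
    simp [Algebra.TensorProduct.tmul_mul_tmul]
  -- (ε ⊗ id) R = 1
  have hw : (∑ i, Coalgebra.counit (R := k) (a i) • b i) = (1 : A) := by
    have h := congrArg (TensorProduct.map (epsl (k := k)) (LinearMap.id (R := k) (M := A))) hhex1
    simp only [map_sum, TensorProduct.map_tmul, epsl_comul, epsl_tmul, LinearMap.id_coe,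
      id_eq] at h
    have h2 : (∑ i, ∑ j, (Coalgebra.counit (R := k) (a i) • a j) ⊗ₜ[k] (b i * b j))
        = ((1 : A) ⊗ₜ[k] (∑ i, Coalgebra.counit (R := k) (a i) • b i)) * (∑ i, a i ⊗ₜ[k] b i) := by
      rw [TensorProduct.tmul_sum, Finset.sum_mul_sum]
      refine Finset.sum_congr rfl fun i _ => Finset.sum_congr rfl fun j _ => ?_
      simp only [Algebra.TensorProduct.tmul_mul_tmul, one_mul, mul_one, smul_mul_assoc,
        TensorProduct.smul_tmul, TensorProduct.tmul_smul]
    rw [h2] at h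
    have h3 : ((1 : A) ⊗ₜ[k] (∑ i, Coalgebra.counit (R := k) (a i) • b i))
        = (1 : A ⊗[k] A) :=
      hRunit.mul_right_cancel (by rw [← h, one_mul])
    have h4 := congrArg (LinearMap.mul' k A) h3
    rwa [Algebra.TensorProduct.one_def, LinearMap.mul'_apply, LinearMap.mul'_apply,
      one_mul, one_mul] at h4
  -- (id ⊗ ε) R = 1
  have hv' : (∑ i, Coalgebra.counit (R := k) (b i) • a i) = (1 : A) := by
    have h := congrArg (TensorProduct.map (LinearMap.id (R := k) (M := A)) (epsr (k := k))) hhex2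
    simp only [map_sum, TensorProduct.map_tmul, epsr_comul, epsr_tmul, LinearMap.id_coe,
      id_eq] at h
    have h2 : (∑ i, ∑ j, (a i * a j) ⊗ₜ[k] (Coalgebra.counit (R := k) (b i) • b j))
        = ((∑ i, Coalgebra.counit (R := k) (b i) • a i) ⊗ₜ[k] (1 : A)) * (∑ i, a i ⊗ₜ[k] b i) := by
      rw [TensorProduct.sum_tmul, Finset.sum_mul_sum]
      refine Finset.sum_congr rfl fun i _ => Finset.sum_congr rfl fun j _ => ?_
      simp only [Algebra.TensorProduct.tmul_mul_tmul, one_mul, mul_one, smul_mul_assoc,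
        TensorProduct.smul_tmul, TensorProduct.tmul_smul]
    rw [h2] at h
    have h3 : ((∑ i, Coalgebra.counit (R := k) (b i) • a i) ⊗ₜ[k] (1 : A))
        = (1 : A ⊗[k] A) :=
      hRunit.mul_right_cancel (by rw [← h, one_mul])
    have h4 := congrArg (LinearMap.mul' k A) h3
    rwa [Algebra.TensorProduct.one_def, LinearMap.mul'_apply, LinearMap.mul'_apply,
      mul_one, mul_one] at h4
  -- (S ⊗ id) R is a left inverse of R
  have hRl : (∑ i, ant (k := k) (a i) ⊗ₜ[k] b i) * (∑ i, a i ⊗ₜ[k] b i) = 1 := by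
    have h := congrArg (TensorProduct.map
      (LinearMap.mul' k A ∘ₗ TensorProduct.map (ant (k := k)) LinearMap.id)
      (LinearMap.id (R := k) (M := A))) hhex1
    simp only [map_sum, TensorProduct.map_tmul, LinearMap.comp_apply, LinearMap.id_coe, id_eq,
      mul_map_ant_id_comul] at h
    calc (∑ i, ant (k := k) (a i) ⊗ₜ[k] b i) * (∑ i, a i ⊗ₜ[k] b i)
        = ∑ i, ∑ j, (ant (k := k) (a i) * a j) ⊗ₜ[k] (b i * b j) := by
          rw [Finset.sum_mul_sum]
          simp [Algebra.TensorProduct.tmul_mul_tmul]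
      _ = ∑ i, algebraMap k A (Coalgebra.counit (R := k) (a i)) ⊗ₜ[k] b i := h.symm
      _ = (1 : A) ⊗ₜ[k] (∑ i, Coalgebra.counit (R := k) (a i) • b i) := by
          rw [TensorProduct.tmul_sum]
          refine Finset.sum_congr rfl fun i _ => ?_
          rw [Algebra.algebraMap_eq_smul_one, TensorProduct.smul_tmul, TensorProduct.tmul_smul]
      _ = 1 := by rw [hw, ← Algebra.TensorProduct.one_def]
  -- hence a two-sided inverse
  have hRlr : (∑ i, a i ⊗ₜ[k] b i) * (∑ i, ant (k := k) (a i) ⊗ₜ[k] b i) = 1 := by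
    obtain ⟨r, hr⟩ := hRunit
    have h1 : (∑ i, ant (k := k) (a i) ⊗ₜ[k] b i) = ↑r⁻¹ :=
      Units.eq_inv_of_mul_eq_one_right (by rw [hr]; exact hRl)
    rw [h1, ← hr]
    exact r.mul_inv
  -- (id ⊗ S⁻¹) R is a left inverse of R
  have hSinvax : ∀ x : A, ∀ r : Coalgebra.Repr k x (A × A),
      ∑ t ∈ r.index, Sinv (r.right t) * r.left t
        = algebraMap k A (Coalgebra.counit (R := k) x) := by
    intro x r
    have hinj : ∀ p q : A, ant (k := k) p = ant (k := k) q → p = q := by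
      intro p q h
      rw [← hS1 p, h, hS1]
    refine hinj _ _ ?_
    rw [map_sum, ant_algebraMap]
    calc ∑ t ∈ r.index, ant (k := k) (Sinv (r.right t) * r.left t)
        = ∑ t ∈ r.index, ant (k := k) (r.left t) * r.right t := by
          refine Finset.sum_congr rfl fun t _ => ?_
          rw [ant_mul, hS2]
      _ = algebraMap k A (Coalgebra.counit (R := k) x) := sum_ant_mul r
  have hRr : (∑ i, a i ⊗ₜ[k] Sinv (b i)) * (∑ i, a i ⊗ₜ[k] b i) = 1 := by
    have h := congrArg (TensorProduct.map (LinearMap.id (R := k) (M := A))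
      (LinearMap.mul' k A ∘ₗ TensorProduct.map Sinv LinearMap.id
        ∘ₗ (TensorProduct.comm k A A).toLinearMap)) hhex2
    simp only [map_sum, TensorProduct.map_tmul, LinearMap.comp_apply, LinearMap.id_coe, id_eq,
      LinearEquiv.coe_coe, TensorProduct.comm_tmul, LinearMap.mul'_apply] at h
    have hlhs : ∀ i : ι, (LinearMap.mul' k A) (TensorProduct.map Sinv LinearMap.id
        ((TensorProduct.comm k A A) (Coalgebra.comul (R := k) (b i))))
        = algebraMap k A (Coalgebra.counit (R := k) (b i)) := by
      intro i
      let r := Coalgebra.Repr.arbitrary k (b i)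
      rw [← r.eq]
      simp only [map_sum, TensorProduct.comm_tmul, TensorProduct.map_tmul, LinearMap.id_coe,
        id_eq, LinearMap.mul'_apply]
      exact hSinvax (b i) r
    simp only [hlhs] at h
    calc (∑ i, a i ⊗ₜ[k] Sinv (b i)) * (∑ i, a i ⊗ₜ[k] b i)
        = ∑ i, ∑ j, (a i * a j) ⊗ₜ[k] (Sinv (b i) * b j) := by
          rw [Finset.sum_mul_sum]
          simp [Algebra.TensorProduct.tmul_mul_tmul]
      _ = ∑ i, a i ⊗ₜ[k] algebraMap k A (Coalgebra.counit (R := k) (b i)) := h.symm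
      _ = (∑ i, Coalgebra.counit (R := k) (b i) • a i) ⊗ₜ[k] (1 : A) := by
          rw [TensorProduct.sum_tmul]
          refine Finset.sum_congr rfl fun i _ => ?_
          simp [Algebra.algebraMap_eq_smul_one, ← TensorProduct.smul_tmul,
            TensorProduct.smul_tmul']
      _ = 1 := by rw [hv', ← Algebra.TensorProduct.one_def]
  -- the two inverses coincide
  have hRlRr : (∑ i, ant (k := k) (a i) ⊗ₜ[k] b i) = (∑ i, a i ⊗ₜ[k] Sinv (b i)) := by
    calc (∑ i, ant (k := k) (a i) ⊗ₜ[k] b i)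
        = 1 * (∑ i, ant (k := k) (a i) ⊗ₜ[k] b i) := (one_mul _).symm
      _ = ((∑ i, a i ⊗ₜ[k] Sinv (b i)) * (∑ i, a i ⊗ₜ[k] b i))
            * (∑ i, ant (k := k) (a i) ⊗ₜ[k] b i) := by rw [hRr]
      _ = (∑ i, a i ⊗ₜ[k] Sinv (b i))
            * ((∑ i, a i ⊗ₜ[k] b i) * (∑ i, ant (k := k) (a i) ⊗ₜ[k] b i)) := by
          rw [mul_assoc]
      _ = (∑ i, a i ⊗ₜ[k] Sinv (b i)) := by rw [hRlr, mul_one]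
  -- (S⁻¹ ⊗ S⁻¹) R = R
  have hdiamond : (∑ i, Sinv (a i) ⊗ₜ[k] Sinv (b i)) = ∑ i, a i ⊗ₜ[k] b i := by
    have h := congrArg (TensorProduct.map Sinv (LinearMap.id (R := k) (M := A))) hRlRr
    simpa [map_sum, hS1] using h.symm
  -- (S ⊗ S) R = R
  have hSS : (∑ i, ant (k := k) (a i) ⊗ₜ[k] ant (k := k) (b i)) = ∑ i, a i ⊗ₜ[k] b i := by
    have h := congrArg (TensorProduct.map (ant (k := k)) (ant (k := k))) hdiamond
    simp only [map_sum, TensorProduct.map_tmul, hS2] at h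
    exact h.symm
  -- (S² ⊗ S²) R = R
  have hS2S2 : (∑ i, ant (k := k) (ant (k := k) (a i)) ⊗ₜ[k] ant (k := k) (ant (k := k) (b i)))
      = ∑ i, a i ⊗ₜ[k] b i := by
    have h := congrArg (TensorProduct.map (ant (k := k)) (ant (k := k))) hSS
    simp only [map_sum, TensorProduct.map_tmul] at h
    rw [h]; exact hSS
  -- claim 1
  have claim1 : (∑ i, ant (k := k) (b i) * a i) = (∑ i, b i * Sinv (a i)) := by
    have h := congrArg (LinearMap.mul' k A ∘ₗ TensorProduct.map (ant (k := k)) LinearMap.id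
      ∘ₗ (TensorProduct.comm k A A).toLinearMap) hdiamond
    simpa [map_sum, hS2] using h.symm
  -- claim 4
  have claim4 : (∑ i, Sinv (Sinv (b i)) * a i) = (∑ i, Sinv (b i) * ant (k := k) (a i)) := by
    have h := congrArg (LinearMap.mul' k A ∘ₗ TensorProduct.map (Sinv ∘ₗ Sinv) LinearMap.id
      ∘ₗ (TensorProduct.comm k A A).toLinearMap) hSS
    simpa [map_sum, hS1] using h.symm
  -- claim 5
  have claim5 : (∑ i, Sinv (Sinv (b i)) * a i) = (∑ i, b i * ant (k := k) (ant (k := k) (a i))) := by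
    have h := congrArg (LinearMap.mul' k A ∘ₗ TensorProduct.map (Sinv ∘ₗ Sinv) LinearMap.id
      ∘ₗ (TensorProduct.comm k A A).toLinearMap) hS2S2
    simpa [map_sum, hS1] using h.symm
  -- the Drinfeld-element commutation auxiliary identity
  have hdag : ∀ (x : A) (r : Coalgebra.Repr k x (A × A)),
      ∑ t ∈ r.index, ant (k := k) (r.right t) * ((∑ i, ant (k := k) (b i) * a i) * r.left t)
        = Coalgebra.counit (R := k) x • (∑ i, ant (k := k) (b i) * a i) := by
    intro x r
    have h := hIntertwine x
    rw [← r.eq, Finset.sum_mul_sum, map_sum, Finset.sum_mul_sum] at h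
    simp only [TensorProduct.comm_tmul, Algebra.TensorProduct.tmul_mul_tmul] at h
    have h2 := congrArg (LinearMap.mul' k A ∘ₗ TensorProduct.map (ant (k := k)) LinearMap.id
      ∘ₗ (TensorProduct.comm k A A).toLinearMap) h
    simp only [map_sum, LinearMap.comp_apply, LinearEquiv.coe_coe, TensorProduct.comm_tmul,
      TensorProduct.map_tmul, LinearMap.id_coe, id_eq, LinearMap.mul'_apply, ant_mul] at h2
    calc ∑ t ∈ r.index, ant (k := k) (r.right t) * ((∑ i, ant (k := k) (b i) * a i) * r.left t)
        = ∑ i, ∑ t ∈ r.index,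
            ant (k := k) (r.right t) * ant (k := k) (b i) * (a i * r.left t) := by
          rw [Finset.sum_comm]
          refine Finset.sum_congr rfl fun t _ => ?_
          rw [Finset.sum_mul, Finset.mul_sum]
          refine Finset.sum_congr rfl fun i _ => ?_
          simp only [mul_assoc]
      _ = ∑ t ∈ r.index, ∑ j,
            ant (k := k) (b j) * ant (k := k) (r.left t) * (r.right t * a j) := h2
      _ = ∑ j, ant (k := k) (b j) * algebraMap k A (Coalgebra.counit (R := k) x) * a j := by
          rw [Finset.sum_comm]
          refine Finset.sum_congr rfl fun j _ => ?_
          rw [← sum_ant_mul r, Finset.mul_sum, Finset.sum_mul]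
          refine Finset.sum_congr rfl fun t _ => ?_
          simp only [mul_assoc]
      _ = Coalgebra.counit (R := k) x • (∑ i, ant (k := k) (b i) * a i) := by
          rw [Finset.smul_sum]
          refine Finset.sum_congr rfl fun j _ => ?_
          rw [← Algebra.commutes, mul_assoc, ← Algebra.smul_def]
  -- almost-centrality of u
  have hcent : ∀ x : A, (∑ i, ant (k := k) (b i) * a i) * x
      = ant (k := k) (ant (k := k) x) * (∑ i, ant (k := k) (b i) * a i) := by
    intro x
    let r := Coalgebra.Repr.arbitrary k x
    let a₁ : (i : r.ι) → Coalgebra.Repr k (r.left i) (A × A) := fun i => Coalgebra.Repr.arbitrary k _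
    let a₂ : (i : r.ι) → Coalgebra.Repr k (r.right i) (A × A) := fun i => Coalgebra.Repr.arbitrary k _
    have hkey := Coalgebra.sum_tmul_tmul_eq (R := k) r a₁ a₂
    have h2 := congrArg (LinearMap.mul' k A ∘ₗ TensorProduct.map
      ((ant (k := k)) ∘ₗ LinearMap.mul' k A ∘ₗ TensorProduct.map LinearMap.id (ant (k := k)))
      (LinearMap.mulLeft k (∑ i, ant (k := k) (b i) * a i))
      ∘ₗ (TensorProduct.comm k A (A ⊗[k] A)).toLinearMap) hkey
    simp only [map_sum, LinearMap.comp_apply, LinearEquiv.coe_coe, TensorProduct.comm_tmul,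
      TensorProduct.map_tmul, LinearMap.id_coe, id_eq, LinearMap.mul'_apply,
      LinearMap.mulLeft_apply, ant_mul] at h2
    have hL : ∑ i ∈ r.index, ∑ j ∈ (a₁ i).index,
        ant (k := k) (ant (k := k) (r.right i)) * ant (k := k) ((a₁ i).right j) *
          ((∑ i, ant (k := k) (b i) * a i) * (a₁ i).left j)
        = ant (k := k) (ant (k := k) x) * (∑ i, ant (k := k) (b i) * a i) := by
      calc ∑ i ∈ r.index, ∑ j ∈ (a₁ i).index,
          ant (k := k) (ant (k := k) (r.right i)) * ant (k := k) ((a₁ i).right j) *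
            ((∑ i, ant (k := k) (b i) * a i) * (a₁ i).left j)
          = ∑ i ∈ r.index, ant (k := k) (ant (k := k) (r.right i)) *
              (Coalgebra.counit (R := k) (r.left i) • (∑ i, ant (k := k) (b i) * a i)) := by
            refine Finset.sum_congr rfl fun i _ => ?_
            rw [← hdag (r.left i) (a₁ i), Finset.mul_sum]
            refine Finset.sum_congr rfl fun j _ => ?_
            simp only [mul_assoc]
        _ = (∑ i ∈ r.index, Coalgebra.counit (R := k) (r.left i) •
              ant (k := k) (ant (k := k) (r.right i))) * (∑ i, ant (k := k) (b i) * a i) := by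
            rw [Finset.sum_mul]
            refine Finset.sum_congr rfl fun i _ => ?_
            rw [mul_smul_comm, smul_mul_assoc]
        _ = ant (k := k) (ant (k := k) x) * (∑ i, ant (k := k) (b i) * a i) := by
            congr 1
            calc ∑ i ∈ r.index, Coalgebra.counit (R := k) (r.left i) •
                  ant (k := k) (ant (k := k) (r.right i))
                = ant (k := k) (ant (k := k)
                    (∑ i ∈ r.index, Coalgebra.counit (R := k) (r.left i) • r.right i)) := by
                  rw [map_sum, map_sum]
                  refine Finset.sum_congr rfl fun i _ => ?_
                  rw [map_smul, map_smul]
              _ = ant (k := k) (ant (k := k) x) := by rw [eps_left x r]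
    have hR : ∑ i ∈ r.index, ∑ j ∈ (a₂ i).index,
        ant (k := k) (ant (k := k) ((a₂ i).right j)) * ant (k := k) ((a₂ i).left j) *
          ((∑ i, ant (k := k) (b i) * a i) * r.left i)
        = (∑ i, ant (k := k) (b i) * a i) * x := by
      calc ∑ i ∈ r.index, ∑ j ∈ (a₂ i).index,
          ant (k := k) (ant (k := k) ((a₂ i).right j)) * ant (k := k) ((a₂ i).left j) *
            ((∑ i, ant (k := k) (b i) * a i) * r.left i)
          = ∑ i ∈ r.index, algebraMap k A (Coalgebra.counit (R := k) (r.right i)) *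
              ((∑ i, ant (k := k) (b i) * a i) * r.left i) := by
            have hinner : ∀ i : r.ι, ∑ j ∈ (a₂ i).index,
                ant (k := k) (ant (k := k) ((a₂ i).right j)) * ant (k := k) ((a₂ i).left j)
                = algebraMap k A (Coalgebra.counit (R := k) (r.right i)) := by
              intro i
              calc ∑ j ∈ (a₂ i).index,
                  ant (k := k) (ant (k := k) ((a₂ i).right j)) * ant (k := k) ((a₂ i).left j)
                  = ∑ j ∈ (a₂ i).index,
                      ant (k := k) ((a₂ i).left j * ant (k := k) ((a₂ i).right j)) :=
                    Finset.sum_congr rfl fun j _ => (ant_mul _ _).symm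
                _ = ant (k := k) (∑ j ∈ (a₂ i).index,
                      (a₂ i).left j * ant (k := k) ((a₂ i).right j)) := (map_sum _ _ _).symm
                _ = algebraMap k A (Coalgebra.counit (R := k) (r.right i)) := by
                    rw [sum_mul_ant (a₂ i), ant_algebraMap]
            refine Finset.sum_congr rfl fun i _ => ?_
            rw [← hinner i]
            exact (Finset.sum_mul _ _ _).symm
        _ = (∑ i, ant (k := k) (b i) * a i) *
              (∑ i ∈ r.index, Coalgebra.counit (R := k) (r.right i) • r.left i) := by
            rw [Finset.mul_sum]
            refine Finset.sum_congr rfl fun i _ => ?_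
            rw [← Algebra.smul_def, mul_smul_comm]
        _ = (∑ i, ant (k := k) (b i) * a i) * x := by rw [eps_right x r]
    rw [hL, hR] at h2
    exact h2.symm
  -- key identity : ∑ bᵢ u aᵢ = 1
  have key : ∑ i, b i * ((∑ j, ant (k := k) (b j) * a j) * a i) = 1 := by
    have h := congrArg (LinearMap.mul' k A ∘ₗ TensorProduct.map
      (LinearMap.mul' k A ∘ₗ TensorProduct.map LinearMap.id (ant (k := k))) LinearMap.id
      ∘ₗ (TensorProduct.comm k A (A ⊗[k] A)).toLinearMap) hhex2
    simp only [map_sum, LinearMap.comp_apply, LinearEquiv.coe_coe, TensorProduct.comm_tmul,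
      TensorProduct.map_tmul, LinearMap.id_coe, id_eq, LinearMap.mul'_apply,
      mul_map_id_ant_comul] at h
    have h1 : ∑ i, algebraMap k A (Coalgebra.counit (R := k) (b i)) * a i = 1 := by
      rw [← hv']
      exact Finset.sum_congr rfl fun i _ => (Algebra.smul_def _ _).symm
    rw [h1] at h
    calc ∑ i, b i * ((∑ j, ant (k := k) (b j) * a j) * a i)
        = ∑ i, ∑ j, b j * ant (k := k) (b i) * (a i * a j) := by
          rw [Finset.sum_comm]
          refine Finset.sum_congr rfl fun i _ => ?_
          rw [Finset.sum_mul, Finset.mul_sum]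
          refine Finset.sum_congr rfl fun j _ => ?_
          simp only [mul_assoc]
      _ = 1 := h.symm
  -- claim 2
  have claim2 : (∑ i, ant (k := k) (b i) * a i) * (∑ i, Sinv (Sinv (b i)) * a i) = 1 := by
    rw [Finset.mul_sum]
    calc ∑ i, (∑ j, ant (k := k) (b j) * a j) * (Sinv (Sinv (b i)) * a i)
        = ∑ i, b i * ((∑ j, ant (k := k) (b j) * a j) * a i) := by
          refine Finset.sum_congr rfl fun i _ => ?_
          rw [← mul_assoc, hcent (Sinv (Sinv (b i))), hS2, hS2, mul_assoc]
      _ = 1 := key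
  -- claim 3
  have claim3 : (∑ i, Sinv (Sinv (b i)) * a i) * (∑ i, ant (k := k) (b i) * a i) = 1 := by
    rw [Finset.sum_mul]
    calc ∑ i, Sinv (Sinv (b i)) * a i * (∑ j, ant (k := k) (b j) * a j)
        = ∑ i, Sinv (Sinv (b i)) * ((∑ j, ant (k := k) (b j) * a j) * Sinv (Sinv (a i))) := by
          refine Finset.sum_congr rfl fun i _ => ?_
          rw [mul_assoc, hcent (Sinv (Sinv (a i))), hS2, hS2]
      _ = ∑ i, b i * ((∑ j, ant (k := k) (b j) * a j) * a i) := by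
          have h := congrArg (LinearMap.mul' k A
            ∘ₗ TensorProduct.map (Sinv ∘ₗ Sinv)
                (LinearMap.mulLeft k (∑ j, ant (k := k) (b j) * a j) ∘ₗ Sinv ∘ₗ Sinv)
            ∘ₗ (TensorProduct.comm k A A).toLinearMap) hS2S2
          simpa [map_sum, hS1] using h.symm
      _ = 1 := key
  exact ⟨claim1, claim2, claim3, claim4, claim5⟩
end

section
/- In a quasitriangular Hopf algebra with R = \sum_i a_i \otimes b_i and RR' = \sum_i X_i \otimes Y_i, the coproduct of the second leg of RR' satisfies: \sum_i X_i \otimes Y_i' \otimes Y_i'' = \sum_{i,j,k} a_j X_i b_k \otimes Y_i \otimes b_j a_k. -/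
open scoped TensorProduct
open TensorProduct

variable {k A : Type} [Field k] [Ring A] [HopfAlgebra k A]

/-- In a quasitriangular Hopf algebra with `R = ∑ aᵢ ⊗ bᵢ` and
`RR' = ∑ Xᵢ ⊗ Yᵢ`, one has `∑ Xᵢ ⊗ Yᵢ' ⊗ Yᵢ'' = ∑ aⱼXᵢb_l ⊗ Yᵢ ⊗ bⱼa_l`. -/
theorem comul_second_leg_of_RRp
    (ι : Type) [Fintype ι] (a b : ι → A)
    (hRunit : IsUnit (∑ i, a i ⊗ₜ[k] b i))
    (hIntertwine : ∀ x : A, (∑ i, a i ⊗ₜ[k] b i) * Coalgebra.comul x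
        = (TensorProduct.comm k A A) (Coalgebra.comul x) * (∑ i, a i ⊗ₜ[k] b i))
    (hex1 : (∑ i, (Coalgebra.comul (R := k) (a i)) ⊗ₜ[k] b i : (A ⊗[k] A) ⊗[k] A)
        = (∑ i, (a i ⊗ₜ[k] (1:A)) ⊗ₜ[k] b i) * (∑ i, ((1:A) ⊗ₜ[k] a i) ⊗ₜ[k] b i))
    (hex2 : (∑ i, a i ⊗ₜ[k] (Coalgebra.comul (R := k) (b i)) : A ⊗[k] (A ⊗[k] A))
        = (∑ i, a i ⊗ₜ[k] ((1:A) ⊗ₜ[k] b i)) * (∑ i, a i ⊗ₜ[k] (b i ⊗ₜ[k] (1:A))))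
    (κ : Type) [Fintype κ] (X Y : κ → A)
    (hXY : (∑ i, X i ⊗ₜ[k] Y i) = (∑ i, a i ⊗ₜ[k] b i) * (∑ i, b i ⊗ₜ[k] a i)) :
    (∑ i, X i ⊗ₜ[k] (Coalgebra.comul (R := k) (Y i)) : A ⊗[k] (A ⊗[k] A))
      = ∑ i, ∑ j, ∑ l, (a j * X i * b l) ⊗ₜ[k] ((Y i) ⊗ₜ[k] (b j * a l)) := by
  classical
  -- the algebra map id ⊗ Δ
  let φ : A ⊗[k] A →ₐ[k] A ⊗[k] (A ⊗[k] A) :=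
    Algebra.TensorProduct.map (AlgHom.id k A) (Bialgebra.comulAlgHom k A)
  have hφ : ∀ (n : Type) [Fintype n] (u v : n → A),
      φ (∑ i, u i ⊗ₜ[k] v i) = ∑ i, u i ⊗ₜ[k] (Coalgebra.comul (R := k) (v i)) := by
    intro n _ u v
    simp [φ, map_sum]
  -- compute φ R
  have key1 : φ (∑ i, a i ⊗ₜ[k] b i)
      = (∑ i, a i ⊗ₜ[k] ((1:A) ⊗ₜ[k] b i)) * (∑ i, a i ⊗ₜ[k] (b i ⊗ₜ[k] (1:A))) := by
    rw [hφ]; exact hex2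
  -- compute φ R' using the cyclic permutation (an algebra isomorphism)
  have key2 : φ (∑ i, b i ⊗ₜ[k] a i)
      = (∑ i, b i ⊗ₜ[k] (a i ⊗ₜ[k] (1:A))) * (∑ i, b i ⊗ₜ[k] ((1:A) ⊗ₜ[k] a i)) := by
    rw [hφ]
    have := congrArg (Algebra.TensorProduct.comm k (A ⊗[k] A) A) hex1
    simpa [map_sum, map_mul] using this
  -- push hXY into the first two legs
  have key3 : (∑ i, X i ⊗ₜ[k] (Y i ⊗ₜ[k] (1:A)))
      = (∑ i, a i ⊗ₜ[k] (b i ⊗ₜ[k] (1:A))) * (∑ i, b i ⊗ₜ[k] (a i ⊗ₜ[k] (1:A))) := by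
    have := congrArg
      (Algebra.TensorProduct.map (AlgHom.id k A)
        (Algebra.TensorProduct.includeLeft : A →ₐ[k] A ⊗[k] A)) hXY
    simpa [map_sum, map_mul] using this
  calc (∑ i, X i ⊗ₜ[k] (Coalgebra.comul (R := k) (Y i)) : A ⊗[k] (A ⊗[k] A))
      = φ (∑ i, X i ⊗ₜ[k] Y i) := (hφ κ X Y).symm
    _ = φ (∑ i, a i ⊗ₜ[k] b i) * φ (∑ i, b i ⊗ₜ[k] a i) := by rw [hXY, map_mul]
    _ = (∑ i, a i ⊗ₜ[k] ((1:A) ⊗ₜ[k] b i)) *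
          ((∑ i, a i ⊗ₜ[k] (b i ⊗ₜ[k] (1:A))) * (∑ i, b i ⊗ₜ[k] (a i ⊗ₜ[k] (1:A)))) *
          (∑ i, b i ⊗ₜ[k] ((1:A) ⊗ₜ[k] a i)) := by
        rw [key1, key2]; simp only [mul_assoc]
    _ = (∑ j, a j ⊗ₜ[k] ((1:A) ⊗ₜ[k] b j)) * (∑ i, X i ⊗ₜ[k] (Y i ⊗ₜ[k] (1:A))) *
          (∑ l, b l ⊗ₜ[k] ((1:A) ⊗ₜ[k] a l)) := by rw [key3]
    _ = ∑ i, ∑ j, ∑ l, (a j * X i * b l) ⊗ₜ[k] ((Y i) ⊗ₜ[k] (b j * a l)) := by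
        simp only [Finset.sum_mul, Finset.mul_sum,
          Algebra.TensorProduct.tmul_mul_tmul, one_mul, mul_one]
        show ∑ j, ∑ i, ∑ l, _ = _
        rw [Finset.sum_comm]
        exact Finset.sum_congr rfl fun i _ => Finset.sum_comm ..
end
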